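/- For any graph G with maximum degree Δ and no isolated vertices, there exists a CFON coloring of G using at most Δ + 1 colors; i.e., a coloring c : V(G) → Fin (Δ+1) such that every vertex v has some color appearing exactly once among the neighbors of v. -/
import Mathlib

open Finset

/-- Any graph with maximum degree `Δ` and no isolated vertices has a CFON coloring
with at most `Δ + 1` colors: every vertex has some color appearing exactly once
among its neighbors. -/
theorem cfon_of_maxDegree {V : Type*} [Fintype V] [DecidableEq V]
    (G : SimpleGraph V) [DecidableRel G.Adj]
    (hiso : ∀ v : V, 0 < G.degree v) :
    ∃ c : V → Fin (G.maxDegree + 1),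
      ∀ v : V, ∃ a : Fin (G.maxDegree + 1), ∃! u : V, G.Adj v u ∧ c u = a := by
  classical
  have key : ∀ s : Finset V, ∃ c : V → Fin (G.maxDegree + 1),
      ∀ v : V, ((G.neighborFinset v) ∩ s).Nonempty →
        ∃ a, ∃! u : V, u ∈ (G.neighborFinset v) ∩ s ∧ c u = a := by
    intro s
    induction s using Finset.induction_on with
    | empty => exact ⟨fun _ => 0, fun v h => absurd h (by simp)⟩
    | @insert x s hxs ih =>
      obtain ⟨c, hc⟩ := ih
      set F : Finset (Fin (G.maxDegree + 1)) :=
        (G.neighborFinset x).biUnion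
          (fun v => if h : ((G.neighborFinset v) ∩ s).Nonempty
            then {(hc v h).choose} else ∅) with hF
      have hFcard : F.card ≤ G.maxDegree := by
        have h1 := Finset.card_biUnion_le (s := G.neighborFinset x)
          (t := fun v => if h : ((G.neighborFinset v) ∩ s).Nonempty
            then {(hc v h).choose} else ∅)
        have h2 : ∀ v ∈ G.neighborFinset x,
            (if h : ((G.neighborFinset v) ∩ s).Nonempty
              then ({(hc v h).choose} : Finset (Fin (G.maxDegree + 1))) else ∅).card ≤ 1 := by
          intro v _
          split <;> simp
        calc F.card ≤ _ := h1
          _ ≤ ∑ _v ∈ G.neighborFinset x, 1 := Finset.sum_le_sum h2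
          _ = G.degree x := by rw [Finset.sum_const, smul_eq_mul, mul_one, SimpleGraph.degree]
          _ ≤ G.maxDegree := G.degree_le_maxDegree x
      obtain ⟨b, hb⟩ : ∃ b, b ∉ F := by
        by_contra hcon
        push_neg at hcon
        have hsub : (univ : Finset (Fin (G.maxDegree + 1))) ⊆ F := fun b _ => hcon b
        have := Finset.card_le_card hsub
        simp only [Finset.card_univ, Fintype.card_fin] at this
        omega
      refine ⟨Function.update c x b, ?_⟩
      intro v hv
      by_cases hxv : x ∈ G.neighborFinset v
      · by_cases hs : ((G.neighborFinset v) ∩ s).Nonempty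
        · -- old witness color survives
          have hch := (hc v hs).choose_spec
          obtain ⟨u0, hu0, huniq⟩ := hch
          have hu0x : u0 ≠ x := by
            intro e
            exact hxs (Finset.mem_of_mem_inter_right (e ▸ hu0.1))
          have hvNx : v ∈ G.neighborFinset x := by
            rw [SimpleGraph.mem_neighborFinset] at hxv ⊢
            exact hxv.symm
          have haF : (hc v hs).choose ∈ F := by
            rw [hF]
            refine Finset.mem_biUnion.2 ⟨v, hvNx, ?_⟩
            rw [dif_pos hs]
            exact Finset.mem_singleton_self _
          refine ⟨(hc v hs).choose, u0, ⟨?_, ?_⟩, ?_⟩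
          · rcases Finset.mem_inter.1 hu0.1 with ⟨h1, h2⟩
            exact Finset.mem_inter.2 ⟨h1, Finset.mem_insert_of_mem h2⟩
          · rw [Function.update_of_ne hu0x]
            exact hu0.2
          · rintro u' ⟨hu', hcu'⟩
            by_cases hux : u' = x
            · subst hux
              rw [Function.update_self] at hcu'
              exact absurd (hcu' ▸ haF) hb
            · rw [Function.update_of_ne hux] at hcu'
              rcases Finset.mem_inter.1 hu' with ⟨h1, h2⟩
              rcases Finset.mem_insert.1 h2 with h2 | h2
              · exact absurd h2 hux
              · exact huniq u' ⟨Finset.mem_inter.2 ⟨h1, h2⟩, hcu'⟩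
        · -- the only colored neighbor in insert x s is x itself
          refine ⟨b, x, ⟨?_, ?_⟩, ?_⟩
          · exact Finset.mem_inter.2 ⟨hxv, Finset.mem_insert_self x s⟩
          · rw [Function.update_self]
          · rintro u' ⟨hu', _⟩
            rcases Finset.mem_inter.1 hu' with ⟨h1, h2⟩
            rcases Finset.mem_insert.1 h2 with h2 | h2
            · exact h2
            · exact absurd ⟨u', Finset.mem_inter.2 ⟨h1, h2⟩⟩ hs
      · -- x is not a neighbor of v : everything as before
        have hv' : ((G.neighborFinset v) ∩ s).Nonempty := by
          obtain ⟨u, hu⟩ := hv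
          rcases Finset.mem_inter.1 hu with ⟨h1, h2⟩
          rcases Finset.mem_insert.1 h2 with h2 | h2
          · exact absurd (h2 ▸ h1) hxv
          · exact ⟨u, Finset.mem_inter.2 ⟨h1, h2⟩⟩
        obtain ⟨a, u0, hu0, huniq⟩ := hc v hv'
        have hu0x : u0 ≠ x := by
          intro e
          exact hxv (e ▸ (Finset.mem_inter.1 hu0.1).1)
        refine ⟨a, u0, ⟨?_, ?_⟩, ?_⟩
        · rcases Finset.mem_inter.1 hu0.1 with ⟨h1, h2⟩
          exact Finset.mem_inter.2 ⟨h1, Finset.mem_insert_of_mem h2⟩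
        · rw [Function.update_of_ne hu0x]
          exact hu0.2
        · rintro u' ⟨hu', hcu'⟩
          rcases Finset.mem_inter.1 hu' with ⟨h1, h2⟩
          have hux : u' ≠ x := by
            intro e
            exact hxv (e ▸ h1)
          rw [Function.update_of_ne hux] at hcu'
          rcases Finset.mem_insert.1 h2 with h2 | h2
          · exact absurd h2 hux
          · exact huniq u' ⟨Finset.mem_inter.2 ⟨h1, h2⟩, hcu'⟩
  obtain ⟨c, hc⟩ := key Finset.univ
  refine ⟨c, fun v => ?_⟩
  have hne : ((G.neighborFinset v) ∩ Finset.univ).Nonempty := by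
    rw [Finset.inter_univ]
    exact Finset.card_pos.1 (hiso v)
  obtain ⟨a, u0, hu0, huniq⟩ := hc v hne
  refine ⟨a, u0, ⟨?_, hu0.2⟩, ?_⟩
  · exact (SimpleGraph.mem_neighborFinset G v u0).1 (Finset.mem_inter.1 hu0.1).1
  · rintro u' ⟨hadj, hcu'⟩
    exact huniq u' ⟨Finset.mem_inter.2 ⟨(SimpleGraph.mem_neighborFinset G v u').2 hadj,
      Finset.mem_univ _⟩, hcu'⟩
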